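/- arXiv:1511.02969 — 7 statements merged into one kernel-verified Lean document; each statement's English description precedes it below -/
import Mathlib

section
/- Let O be the origin in ℝ³ and let r be a line in ℝ³ not passing through O, with direction vector d (|d| = 1). Then the set of vanishing points of r on the unit sphere, defined as cl({P/‖P‖ : P ∈ r}) \ {P/‖P‖ : P ∈ r}, is exactly {d, -d}. -/
open scoped RealInnerProductSpace

noncomputable section

abbrev E3 := EuclideanSpace ℝ (Fin 3)
abbrev E2 := EuclideanSpace ℝ (Fin 2)

/-- The vector (a, b) in euclidean ℝ². -/
def vec2 (a b : ℝ) : E2 := (WithLp.equiv 2 (Fin 2 → ℝ)).symm ![a, b]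

/-- The vector (a, b, c) in euclidean ℝ³. -/
def vec3 (a b c : ℝ) : E3 := (WithLp.equiv 2 (Fin 3 → ℝ)).symm ![a, b, c]

/-- Conic projection (anamorphism) onto the unit sphere centered at the origin. -/
def proj (P : E3) : E3 := ‖P‖⁻¹ • P

/-- The line through A with direction d. -/
def lineSet (A d : E3) : Set E3 := {P | ∃ t : ℝ, P = A + t • d}

open Filter Topology

lemma proj_smul_of_pos {c : ℝ} (hc : 0 < c) (P : E3) : proj (c • P) = proj P := by
  unfold proj
  rw [norm_smul, Real.norm_eq_abs, abs_of_pos hc, smul_smul, mul_inv, mul_comm,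
    ← mul_assoc, mul_inv_cancel₀ hc.ne', one_mul]

lemma projContAt {P : E3} (h : P ≠ 0) : ContinuousAt proj P := by
  have h1 : ContinuousAt (fun Q : E3 => ‖Q‖⁻¹) P :=
    (continuous_norm.continuousAt).inv₀ (norm_ne_zero_iff.2 h)
  exact h1.smul continuousAt_id

lemma proj_unit {d : E3} (hd : ‖d‖ = 1) : proj d = d := by
  unfold proj; rw [hd, inv_one, one_smul]

/-- the vanishing set of a line not through the origin, with unit direction d,
is exactly {d, -d}. -/
theorem stmt0 (A d : E3) (hd : ‖d‖ = 1) (hO : ∀ t : ℝ, A + t • d ≠ 0) :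
    closure (proj '' lineSet A d) \ proj '' lineSet A d = {d, -d} := by
  set f : ℝ → E3 := fun t => proj (A + t • d) with hf
  have himg : proj '' lineSet A d = Set.range f := by
    ext x
    constructor
    · rintro ⟨P, ⟨t, rfl⟩, rfl⟩; exact ⟨t, rfl⟩
    · rintro ⟨t, rfl⟩; exact ⟨A + t • d, ⟨t, rfl⟩, rfl⟩
  rw [himg]
  have hd0 : d ≠ 0 := by
    intro h; rw [h, norm_zero] at hd; exact one_ne_zero hd.symm
  have hnd : ‖(-d : E3)‖ = 1 := by rwa [norm_neg]
  have hnd0 : (-d : E3) ≠ 0 := by simpa using hd0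
  have hfc : Continuous f := by
    rw [continuous_iff_continuousAt]
    intro t
    have hline : Continuous (fun s : ℝ => A + s • d) := by fun_prop
    have hcomp : ContinuousAt (proj ∘ fun s : ℝ => A + s • d) t :=
      ContinuousAt.comp (f := fun s : ℝ => A + s • d) (x := t)
        (projContAt (hO t)) hline.continuousAt
    exact hcomp
  -- limit at +∞
  have htop : Tendsto f atTop (𝓝 d) := by
    have h1 : Tendsto (fun t : ℝ => t⁻¹ • A + d) atTop (𝓝 d) := by
      have h0 := (tendsto_inv_atTop_zero (𝕜 := ℝ)).smul_const A
      rw [zero_smul] at h0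
      simpa using h0.add_const d
    have h2 : Tendsto (fun t : ℝ => proj (t⁻¹ • A + d)) atTop (𝓝 (proj d)) :=
      ((projContAt hd0).tendsto).comp h1
    have heq : ∀ᶠ t in atTop, proj (t⁻¹ • A + d) = f t := by
      filter_upwards [eventually_gt_atTop (0 : ℝ)] with t ht
      have hEq : A + t • d = t • (t⁻¹ • A + d) := by
        rw [smul_add, smul_smul, mul_inv_cancel₀ ht.ne', one_smul]
      rw [hf]; dsimp only; rw [hEq, proj_smul_of_pos ht]
    have h3 := h2.congr' heq
    rwa [proj_unit hd] at h3
  -- limit at -∞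
  have hbot : Tendsto f atBot (𝓝 (-d)) := by
    have h1 : Tendsto (fun t : ℝ => (-t)⁻¹ • A + (-d)) atBot (𝓝 (-d)) := by
      have h0 : Tendsto (fun t : ℝ => (-t)⁻¹) atBot (𝓝 0) :=
        (tendsto_inv_atTop_zero (𝕜 := ℝ)).comp tendsto_neg_atBot_atTop
      have h0' := h0.smul_const A
      rw [zero_smul] at h0'
      simpa using h0'.add_const (-d)
    have h2 : Tendsto (fun t : ℝ => proj ((-t)⁻¹ • A + (-d))) atBot (𝓝 (proj (-d))) :=
      ((projContAt hnd0).tendsto).comp h1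
    have heq : ∀ᶠ t in atBot, proj ((-t)⁻¹ • A + (-d)) = f t := by
      filter_upwards [eventually_lt_atBot (0 : ℝ)] with t ht
      have htne : (-t : ℝ) ≠ 0 := (neg_pos.2 ht).ne'
      have hEq : A + t • d = (-t) • ((-t)⁻¹ • A + (-d)) := by
        rw [smul_add, smul_smul, mul_inv_cancel₀ htne, one_smul, smul_neg, neg_smul, neg_neg]
      rw [hf]; dsimp only; rw [hEq, proj_smul_of_pos (neg_pos.2 ht)]
    have h3 := h2.congr' heq
    rwa [proj_unit hnd] at h3
  -- memberships in closure
  have hdmem : d ∈ closure (Set.range f) :=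
    mem_closure_of_tendsto htop (Eventually.of_forall fun t => Set.mem_range_self t)
  have hndmem : (-d : E3) ∈ closure (Set.range f) :=
    mem_closure_of_tendsto hbot (Eventually.of_forall fun t => Set.mem_range_self t)
  -- non-memberships in the range
  have hdnot : d ∉ Set.range f := by
    rintro ⟨t, ht⟩
    have hP : A + t • d ≠ 0 := hO t
    have hPn : ‖A + t • d‖ ≠ 0 := norm_ne_zero_iff.2 hP
    have hEq : A + t • d = ‖A + t • d‖ • d := by
      calc A + t • d = ‖A + t • d‖ • (‖A + t • d‖⁻¹ • (A + t • d)) := by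
            rw [smul_smul, mul_inv_cancel₀ hPn, one_smul]
        _ = ‖A + t • d‖ • d := by
            rw [show ‖A + t • d‖⁻¹ • (A + t • d) = d from ht]
    obtain ⟨n, hn⟩ : ∃ n : ℝ, ‖A + t • d‖ = n := ⟨_, rfl⟩
    rw [hn] at hEq
    apply hO (t - n)
    rw [sub_smul, ← add_sub_assoc, hEq, sub_self]
  have hndnot : (-d : E3) ∉ Set.range f := by
    rintro ⟨t, ht⟩
    have hP : A + t • d ≠ 0 := hO t
    have hPn : ‖A + t • d‖ ≠ 0 := norm_ne_zero_iff.2 hP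
    have hEq : A + t • d = ‖A + t • d‖ • (-d) := by
      calc A + t • d = ‖A + t • d‖ • (‖A + t • d‖⁻¹ • (A + t • d)) := by
            rw [smul_smul, mul_inv_cancel₀ hPn, one_smul]
        _ = ‖A + t • d‖ • (-d) := by
            rw [show ‖A + t • d‖⁻¹ • (A + t • d) = -d from ht]
    obtain ⟨n, hn⟩ : ∃ n : ℝ, ‖A + t • d‖ = n := ⟨_, rfl⟩
    rw [hn] at hEq
    apply hO (t + n)
    rw [add_smul, ← add_assoc, hEq, smul_neg, neg_add_cancel]
  -- closure is contained in range ∪ {d, -d}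
  have hsub : closure (Set.range f) ⊆ Set.range f ∪ {d, -d} := by
    intro x hx
    by_contra hxn
    simp only [Set.mem_union, Set.mem_insert_iff, Set.mem_singleton_iff, not_or] at hxn
    obtain ⟨hxS, hxd, hxnd⟩ := hxn
    obtain ⟨u, hu, hux⟩ := mem_closure_iff_seq_limit.1 hx
    choose t ht using hu
    have hux' : Tendsto (fun n => f (t n)) atTop (𝓝 x) := by
      have : (fun n => f (t n)) = u := funext ht
      rwa [this]
    by_cases hb : ∃ C : ℝ, ∀ n, |t n| ≤ C
    · obtain ⟨C, hC⟩ := hb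
      obtain ⟨a, _, φ, hφ, hlim⟩ := (isCompact_Icc (a := -C) (b := C)).tendsto_subseq
        (fun n => Set.mem_Icc.2 (abs_le.1 (hC n)))
      have h1 : Tendsto (fun k => f (t (φ k))) atTop (𝓝 (f a)) := (hfc.tendsto a).comp hlim
      have h2 : Tendsto (fun k => f (t (φ k))) atTop (𝓝 x) := hux'.comp hφ.tendsto_atTop
      exact hxS ⟨a, tendsto_nhds_unique h1 h2⟩
    · push_neg at hb
      have key : ∀ k : ℕ, ∃ n, k ≤ n ∧ (k : ℝ) < |t n| := by
        intro k
        obtain ⟨B, hB⟩ := ((Set.finite_Iio k).image (fun n => |t n|)).bddAbove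
        obtain ⟨n, hn⟩ := hb (max (k : ℝ) B)
        refine ⟨n, ?_, lt_of_le_of_lt (le_max_left _ _) hn⟩
        by_contra hnk
        push_neg at hnk
        exact absurd (le_trans (hB ⟨n, hnk, rfl⟩) (le_max_right _ _)) (not_le.2 hn)
      choose φ hφge hφgt using key
      have hφtop : Tendsto φ atTop atTop := tendsto_atTop_mono hφge tendsto_id
      have hxφ : Tendsto (fun k => f (t (φ k))) atTop (𝓝 x) := hux'.comp hφtop
      have hcases : (∃ᶠ k : ℕ in atTop, (k : ℝ) < t (φ k)) ∨
          (∃ᶠ k : ℕ in atTop, t (φ k) < -(k : ℝ)) := by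
        by_contra hcon
        push_neg at hcon
        obtain ⟨h1, h2⟩ := hcon
        replace h1 : ∀ᶠ k : ℕ in atTop, ¬ ((k : ℝ) < t (φ k)) := h1.mono fun k hk => not_lt.2 hk
        replace h2 : ∀ᶠ k : ℕ in atTop, ¬ (t (φ k) < -(k : ℝ)) := h2.mono fun k hk => not_lt.2 hk
        obtain ⟨k, hk1, hk2⟩ := (h1.and h2).exists
        rcases lt_abs.1 (hφgt k) with h | h
        · exact hk1 h
        · exact hk2 (by linarith)
      rcases hcases with hfr | hfr
      · obtain ⟨ψ, hψ, hψp⟩ := Filter.extraction_of_frequently_atTop hfr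
        have htend : Tendsto (fun j => t (φ (ψ j))) atTop atTop :=
          tendsto_atTop_mono (fun j => (hψp j).le)
            (tendsto_natCast_atTop_atTop.comp hψ.tendsto_atTop)
        have h1 : Tendsto (fun j => f (t (φ (ψ j)))) atTop (𝓝 d) := htop.comp htend
        have h2 : Tendsto (fun j => f (t (φ (ψ j)))) atTop (𝓝 x) := hxφ.comp hψ.tendsto_atTop
        exact hxd (tendsto_nhds_unique h2 h1)
      · obtain ⟨ψ, hψ, hψp⟩ := Filter.extraction_of_frequently_atTop hfr
        have htend : Tendsto (fun j => t (φ (ψ j))) atTop atBot :=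
          tendsto_atBot_mono (fun j => (hψp j).le)
            (tendsto_neg_atTop_atBot.comp (tendsto_natCast_atTop_atTop.comp hψ.tendsto_atTop))
        have h1 : Tendsto (fun j => f (t (φ (ψ j)))) atTop (𝓝 (-d)) := hbot.comp htend
        have h2 : Tendsto (fun j => f (t (φ (ψ j)))) atTop (𝓝 x) := hxφ.comp hψ.tendsto_atTop
        exact hxnd (tendsto_nhds_unique h2 h1)
  ext x
  simp only [Set.mem_diff, Set.mem_insert_iff, Set.mem_singleton_iff]
  constructor
  · rintro ⟨hc, hn⟩
    rcases hsub hc with h | h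
    · exact absurd h hn
    · simpa using h
  · rintro (rfl | rfl)
    · exact ⟨hdmem, hdnot⟩
    · exact ⟨hndmem, hndnot⟩
end
end

section
/- Let H be a plane in ℝ³ not passing through the origin O. Then the vanishing set of H on the unit sphere, cl({P/‖P‖ : P ∈ H}) \ {P/‖P‖ : P ∈ H}, equals the great circle S² ∩ H₀, where H₀ is the plane through O parallel to H. -/
open scoped RealInnerProductSpace

noncomputable section

lemma norm_proj {P : E3} (h : P ≠ 0) : ‖proj P‖ = 1 := by
  have hp : (0:ℝ) < ‖P‖ := norm_pos_iff.mpr h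
  rw [proj, norm_smul, norm_inv, norm_norm, inv_mul_cancel₀ hp.ne']

lemma proj_image (n : E3) (c : ℝ) (hc : c ≠ 0) :
    proj '' {P : E3 | ⟪n, P⟫ = c} = {Q : E3 | ‖Q‖ = 1 ∧ 0 < c * ⟪n, Q⟫} := by
  ext Q
  constructor
  · rintro ⟨P, hP, rfl⟩
    simp only [Set.mem_setOf_eq] at hP
    have hP0 : P ≠ 0 := by rintro rfl; simp at hP; exact hc hP.symm
    have hPn : (0:ℝ) < ‖P‖ := norm_pos_iff.mpr hP0
    refine ⟨norm_proj hP0, ?_⟩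
    have h1 : ⟪n, proj P⟫ = ‖P‖⁻¹ * c := by rw [proj, real_inner_smul_right, hP]
    show 0 < c * ⟪n, proj P⟫
    rw [h1]
    have h2 : c * (‖P‖⁻¹ * c) = ‖P‖⁻¹ * (c * c) := by ring
    rw [h2]
    exact mul_pos (inv_pos.mpr hPn) (mul_self_pos.mpr hc)
  · rintro ⟨hQ1, hQ2⟩
    have hi : ⟪n, Q⟫ ≠ 0 := by intro h; rw [h] at hQ2; simp at hQ2
    have ht : 0 < c / ⟪n, Q⟫ := by
      have h : c / ⟪n, Q⟫ = (c * ⟪n, Q⟫) / (⟪n, Q⟫ * ⟪n, Q⟫) := by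
        rw [div_eq_div_iff hi (mul_ne_zero hi hi)]; ring
      rw [h]
      exact div_pos hQ2 (mul_self_pos.mpr hi)
    refine ⟨(c / ⟪n, Q⟫) • Q, ?_, ?_⟩
    · show ⟪n, (c / ⟪n, Q⟫) • Q⟫ = c
      rw [real_inner_smul_right]
      exact div_mul_cancel₀ c hi
    · rw [proj, norm_smul, hQ1, mul_one, Real.norm_eq_abs, abs_of_pos ht, smul_smul,
        inv_mul_cancel₀ ht.ne', one_smul]

/-- the vanishing set of a plane not through the origin is the great circle
S² ∩ H₀, where H₀ is the parallel plane through the origin. -/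
theorem stmt1 (n : E3) (c : ℝ) (hn : n ≠ 0) (hc : c ≠ 0) :
    closure (proj '' {P : E3 | ⟪n, P⟫ = c}) \ proj '' {P : E3 | ⟪n, P⟫ = c}
      = Metric.sphere (0 : E3) 1 ∩ {P : E3 | ⟪n, P⟫ = 0} := by
  rw [proj_image n c hc]
  ext Q
  simp only [Set.mem_diff, Set.mem_setOf_eq, Set.mem_inter_iff, Metric.mem_sphere,
    dist_zero_right]
  constructor
  · rintro ⟨hcl, hni⟩
    have hsub : closure {Q : E3 | ‖Q‖ = 1 ∧ 0 < c * ⟪n, Q⟫}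
        ⊆ {Q : E3 | ‖Q‖ = 1 ∧ 0 ≤ c * ⟪n, Q⟫} := by
      apply closure_minimal
      · rintro x ⟨h1, h2⟩; exact ⟨h1, le_of_lt h2⟩
      · apply IsClosed.inter
        · exact isClosed_eq continuous_norm continuous_const
        · exact isClosed_le continuous_const
            (continuous_const.mul (innerSL ℝ n).continuous)
    obtain ⟨h1, h2⟩ := hsub hcl
    refine ⟨h1, ?_⟩
    by_contra h0
    exact hni ⟨h1, lt_of_le_of_ne h2 (fun h => h0 (by
      rcases mul_eq_zero.mp h.symm with h' | h'
      · exact absurd h' hc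
      · exact h'))⟩
  · rintro ⟨h1, h2⟩
    constructor
    · have hprojQ : proj Q = Q := by simp [proj, h1]
      have hcont : ContinuousAt proj Q := by
        have hQn : ‖Q‖ ≠ 0 := by rw [h1]; norm_num
        exact ((continuousAt_id.norm).inv₀ hQn).smul continuousAt_id
      have hg : Filter.Tendsto (fun t : ℝ => Q + (t * c) • n) (nhdsWithin 0 (Set.Ioi 0))
          (nhds Q) := by
        have hcg : Continuous (fun t : ℝ => Q + (t * c) • n) :=
          continuous_const.add ((continuous_id.mul continuous_const).smul continuous_const)
        have h := (hcg.tendsto 0).mono_left (nhdsWithin_le_nhds (s := Set.Ioi 0))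
        simpa using h
      have htend : Filter.Tendsto (fun t : ℝ => proj (Q + (t * c) • n))
          (nhdsWithin 0 (Set.Ioi 0)) (nhds Q) := by
        have := (hcont.tendsto).comp hg
        rwa [hprojQ] at this
      refine mem_closure_of_tendsto htend ?_
      filter_upwards [self_mem_nhdsWithin] with t ht
      simp only [Set.mem_Ioi] at ht
      have hinner : ⟪n, Q + (t * c) • n⟫ = t * c * ‖n‖ ^ 2 := by
        rw [inner_add_right, real_inner_smul_right, h2, real_inner_self_eq_norm_sq]
        ring
      have hnn : (0:ℝ) < ‖n‖ ^ 2 := by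
        have := norm_pos_iff.mpr hn; positivity
      have hpos : 0 < c * ⟪n, Q + (t * c) • n⟫ := by
        rw [hinner]
        have h : c * (t * c * ‖n‖ ^ 2) = t * (c * c) * ‖n‖ ^ 2 := by ring
        rw [h]
        exact mul_pos (mul_pos ht (mul_self_pos.mpr hc)) hnn
      have hx0 : Q + (t * c) • n ≠ 0 := by
        intro h
        rw [h] at hpos
        simp at hpos
      have hxn : (0:ℝ) < ‖Q + (t * c) • n‖ := norm_pos_iff.mpr hx0
      refine ⟨norm_proj hx0, ?_⟩
      show 0 < c * ⟪n, proj (Q + (t * c) • n)⟫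
      rw [proj, real_inner_smul_right]
      have h : c * (‖Q + (t * c) • n‖⁻¹ * ⟪n, Q + (t * c) • n⟫)
          = ‖Q + (t * c) • n‖⁻¹ * (c * ⟪n, Q + (t * c) • n⟫) := by ring
      rw [h]
      exact mul_pos (inv_pos.mpr hxn) hpos
    · rintro ⟨_, hpos⟩
      rw [h2] at hpos
      simp at hpos
end
end

section
/- Let p(x,y,z) = arccos(y/√(x²+y²+z²)) · (x,z)/√(x²+z²). The restriction of p to the unit sphere minus the point B = (0,−1,0) is a bijection onto the open disc {(u,v) ∈ ℝ² : u² + v² < π²} minus the origin, together with the origin being the image of F = (0,1,0); i.e., p restricted to S² \ {B} is a bijection onto the open disc of radius π. -/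
open scoped RealInnerProductSpace

noncomputable section

/-- The total spherical perspective map: p(x,y,z) = arccos(y/‖P‖) · (x,z)/√(x²+z²). -/
def persp (P : E3) : E2 :=
  (Real.arccos (P 1 / ‖P‖) / Real.sqrt ((P 0) ^ 2 + (P 2) ^ 2)) • vec2 (P 0) (P 2)

/-- The front point F = (0,1,0). -/
def Fpt : E3 := vec3 0 1 0

/-- The back point B = (0,-1,0). -/
def Bpt : E3 := vec3 0 (-1) 0

lemma vec2_apply0 (a b : ℝ) : vec2 a b 0 = a := rfl
lemma vec2_apply1 (a b : ℝ) : vec2 a b 1 = b := rfl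
lemma vec3_apply0 (a b c : ℝ) : vec3 a b c 0 = a := rfl
lemma vec3_apply1 (a b c : ℝ) : vec3 a b c 1 = b := rfl
lemma vec3_apply2 (a b c : ℝ) : vec3 a b c 2 = c := rfl

lemma norm2_eq (x : E2) : ‖x‖ = Real.sqrt (x 0 ^ 2 + x 1 ^ 2) := by
  rw [EuclideanSpace.norm_eq]; simp [Fin.sum_univ_two, sq_abs]

lemma norm3_eq (x : E3) : ‖x‖ = Real.sqrt (x 0 ^ 2 + x 1 ^ 2 + x 2 ^ 2) := by
  rw [EuclideanSpace.norm_eq]; simp [Fin.sum_univ_three, sq_abs]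

lemma sphere_sum {P : E3} (h : P ∈ Metric.sphere (0 : E3) 1) :
    P 0 ^ 2 + P 1 ^ 2 + P 2 ^ 2 = 1 := by
  rw [mem_sphere_iff_norm, sub_zero, norm3_eq] at h
  nlinarith [Real.sq_sqrt (by positivity : (0:ℝ) ≤ P 0 ^ 2 + P 1 ^ 2 + P 2 ^ 2), h]

/-- Inverse map. -/
def pinv (w : E2) : E3 :=
  vec3 (Real.sin ‖w‖ * w 0 / ‖w‖) (Real.cos ‖w‖) (Real.sin ‖w‖ * w 1 / ‖w‖)

lemma ne_B {P : E3} (hs : P 0 ^ 2 + P 1 ^ 2 + P 2 ^ 2 = 1) (hne : P ≠ Bpt) :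
    -1 < P 1 := by
  rcases lt_or_ge (-1) (P 1) with h | h
  · exact h
  · exfalso
    have h1 : P 1 ^ 2 ≤ 1 := by nlinarith
    have h2 : P 1 = -1 := by nlinarith
    apply hne
    have h0 : P 0 = 0 := by nlinarith
    have h3 : P 2 = 0 := by nlinarith
    ext i
    fin_cases i <;> simp [h0, h2, h3, Bpt, vec3]

lemma norm_persp {P : E3} (hP : P ∈ Metric.sphere (0 : E3) 1) (hne : P ≠ Bpt) :
    ‖persp P‖ = Real.arccos (P 1) := by
  have hn : ‖P‖ = 1 := by rwa [mem_sphere_iff_norm, sub_zero] at hP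
  have hsum := sphere_sum hP
  rw [persp, norm_smul, hn, div_one, norm2_eq, vec2_apply0, vec2_apply1]
  rcases eq_or_ne (Real.sqrt (P 0 ^ 2 + P 2 ^ 2)) 0 with h0 | h0
  · have hpz : P 0 ^ 2 + P 2 ^ 2 = 0 := by
      have h1 := Real.sqrt_eq_zero'.mp h0
      nlinarith [sq_nonneg (P 0), sq_nonneg (P 2)]
    have hgt := ne_B hsum hne
    have h1 : P 1 = 1 := by nlinarith
    rw [h0, mul_zero, h1, Real.arccos_one]
  · rw [Real.norm_eq_abs, abs_div, abs_of_nonneg (Real.arccos_nonneg _),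
      abs_of_nonneg (Real.sqrt_nonneg _)]
    field_simp

lemma persp_apply (P : E3) (i : Fin 2) :
    persp P i = (Real.arccos (P 1 / ‖P‖) / Real.sqrt ((P 0) ^ 2 + (P 2) ^ 2)) *
      (vec2 (P 0) (P 2)) i := by
  simp [persp]

lemma left_inv {P : E3} (hP : P ∈ Metric.sphere (0 : E3) 1) (hne : P ≠ Bpt) :
    pinv (persp P) = P := by
  have hn : ‖P‖ = 1 := by rwa [mem_sphere_iff_norm, sub_zero] at hP
  have hsum := sphere_sum hP
  have hgt := ne_B hsum hne
  have hle : P 1 ≤ 1 := by nlinarith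
  have hnp := norm_persp hP hne
  set θ := Real.arccos (P 1) with hθ
  have hθpi : θ < Real.pi := lt_of_le_of_ne (Real.arccos_le_pi _)
    (fun h => absurd (Real.arccos_eq_pi.mp h) (not_le.mpr hgt))
  have hθ0 : 0 ≤ θ := Real.arccos_nonneg _
  have hcos : Real.cos θ = P 1 := Real.cos_arccos (le_of_lt hgt) hle
  have hsq : Real.sqrt (P 0 ^ 2 + P 2 ^ 2) = Real.sin θ := by
    rw [hθ, Real.sin_arccos]; congr 1; nlinarith
  rcases eq_or_lt_of_le hθ0 with h0 | h0
  · -- θ = 0 : P = F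
    have h1 : P 1 = 1 := le_antisymm hle (Real.arccos_eq_zero.mp h0.symm)
    have hpz : P 0 = 0 ∧ P 2 = 0 := by constructor <;> nlinarith
    ext i
    fin_cases i
    · show pinv (persp P) 0 = P 0
      rw [pinv, vec3_apply0, hnp, ← h0, Real.sin_zero, zero_mul, zero_div, hpz.1]
    · show pinv (persp P) 1 = P 1
      rw [pinv, vec3_apply1, hnp, ← h0, Real.cos_zero, h1]
    · show pinv (persp P) 2 = P 2
      rw [pinv, vec3_apply2, hnp, ← h0, Real.sin_zero, zero_mul, zero_div, hpz.2]
  · have hsin : 0 < Real.sin θ := Real.sin_pos_of_pos_of_lt_pi h0 hθpi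
    ext i
    fin_cases i
    · show pinv (persp P) 0 = P 0
      rw [pinv, vec3_apply0, hnp, persp_apply, hn, div_one, ← hθ, hsq, vec2_apply0]
      field_simp
    · show pinv (persp P) 1 = P 1
      rw [pinv, vec3_apply1, hnp]
      exact hcos
    · show pinv (persp P) 2 = P 2
      rw [pinv, vec3_apply2, hnp, persp_apply, hn, div_one, ← hθ, hsq, vec2_apply1]
      field_simp

lemma right_inv {w : E2} (hw : w ∈ Metric.ball (0 : E2) Real.pi) :
    pinv w ∈ Metric.sphere (0 : E3) 1 \ {Bpt} ∧ persp (pinv w) = w := by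
  rw [Metric.mem_ball, dist_zero_right] at hw
  set r := ‖w‖ with hr
  have hr0 : 0 ≤ r := norm_nonneg _
  have hw2 : w 0 ^ 2 + w 1 ^ 2 = r ^ 2 := by
    have := norm2_eq w
    nlinarith [Real.sq_sqrt (by positivity : (0:ℝ) ≤ w 0 ^ 2 + w 1 ^ 2), this]
  rcases eq_or_lt_of_le hr0 with h0 | h0
  · -- r = 0, w = 0
    have hwz : w = 0 := norm_eq_zero.mp h0.symm
    have hQ : pinv w = vec3 0 1 0 := by
      ext i; fin_cases i <;>
        simp [pinv, ← hr, ← h0, vec3_apply0, vec3_apply1, vec3_apply2]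
    constructor
    · constructor
      · rw [mem_sphere_iff_norm, sub_zero, hQ, norm3_eq, vec3_apply0, vec3_apply1,
          vec3_apply2]
        norm_num
      · rw [hQ]
        intro h
        have := congrFun (congrArg (WithLp.equiv 2 (Fin 3 → ℝ)) h) 1
        simp [vec3, Bpt] at this
        norm_num at this
    · rw [hQ, hwz]
      ext i
      fin_cases i <;> simp [persp, vec2, vec3_apply0, vec3_apply1, vec3_apply2]
  · -- 0 < r < π
    have hrne : r ≠ 0 := ne_of_gt h0
    have hsin : 0 < Real.sin r := Real.sin_pos_of_pos_of_lt_pi h0 hw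
    have hQsum : (pinv w 0) ^ 2 + (pinv w 1) ^ 2 + (pinv w 2) ^ 2 = 1 := by
      rw [pinv, vec3_apply0, vec3_apply1, vec3_apply2, ← hr]
      have hpyth := Real.sin_sq_add_cos_sq r
      field_simp
      nlinarith [hw2, hpyth]
    have hQs : pinv w ∈ Metric.sphere (0 : E3) 1 := by
      rw [mem_sphere_iff_norm, sub_zero, norm3_eq, hQsum, Real.sqrt_one]
    have hQ1 : pinv w 1 = Real.cos r := by rw [pinv, vec3_apply1]
    have hcosgt : -1 < Real.cos r := by
      have := Real.cos_lt_cos_of_nonneg_of_le_pi hr0 (le_refl Real.pi) hw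
      rwa [Real.cos_pi] at this
    have hQne : pinv w ≠ Bpt := by
      intro h
      have : pinv w 1 = Bpt 1 := by rw [h]
      rw [hQ1, Bpt, vec3_apply1] at this
      linarith
    refine ⟨⟨hQs, hQne⟩, ?_⟩
    have hn : ‖pinv w‖ = 1 := by rwa [mem_sphere_iff_norm, sub_zero] at hQs
    have harc : Real.arccos (pinv w 1 / ‖pinv w‖) = r := by
      rw [hn, div_one, hQ1, Real.arccos_cos hr0 (le_of_lt hw)]
    have hsq : Real.sqrt ((pinv w 0) ^ 2 + (pinv w 2) ^ 2) = Real.sin r := by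
      rw [pinv, vec3_apply0, vec3_apply2, ← hr]
      rw [show (Real.sin r * w 0 / r) ^ 2 + (Real.sin r * w 1 / r) ^ 2
          = Real.sin r ^ 2 by field_simp; nlinarith [hw2]]
      exact Real.sqrt_sq (le_of_lt hsin)
    ext i
    fin_cases i
    · show persp (pinv w) 0 = w 0
      rw [persp_apply, harc, hsq, vec2_apply0, pinv, vec3_apply0, ← hr]
      field_simp
    · show persp (pinv w) 1 = w 1
      rw [persp_apply, harc, hsq, vec2_apply1, pinv, vec3_apply2, ← hr]
      field_simp


/-- p restricted to S² \ {B} is a bijection onto the open disc of radius π. -/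
theorem stmt6 :
    Set.BijOn persp (Metric.sphere (0 : E3) 1 \ {Bpt}) (Metric.ball (0 : E2) Real.pi) := by
  refine ⟨?_, ?_, ?_⟩
  · rintro P ⟨hP, hPne⟩
    rw [Metric.mem_ball, dist_zero_right, norm_persp hP hPne]
    have := ne_B (sphere_sum hP) hPne
    exact lt_of_le_of_ne (Real.arccos_le_pi _)
      (fun h => absurd (Real.arccos_eq_pi.mp h) (not_le.mpr this))
  · rintro P ⟨hP, hPne⟩ Q ⟨hQ, hQne⟩ h
    rw [← left_inv hP hPne, h, left_inv hQ hQne]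
  · intro w hw
    obtain ⟨hmem, heq⟩ := right_inv hw
    exact ⟨pinv w, hmem, heq⟩
end
end

section
/- (Antipode rule / ruler proposition.) Let p be the total spherical perspective map and let P ∈ S² with P ∉ {F, B} (F = (0,1,0), B = (0,−1,0)). Then p(−P) = p(P) − π·p(P)/‖p(P)‖. In particular, p(P), the origin F' = (0,0), and p(−P) are collinear, p(−P) lies on the ray from p(P) through the origin, and ‖p(P) − p(−P)‖ = π. -/
open scoped RealInnerProductSpace

noncomputable section

lemma norm_vec2 (a b : ℝ) : ‖vec2 a b‖ = Real.sqrt (a^2 + b^2) := by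
  rw [vec2, EuclideanSpace.norm_eq]
  simp [Fin.sum_univ_two, sq_abs]

lemma vec2_neg (a b : ℝ) : vec2 (-a) (-b) = -vec2 a b := by
  ext i; fin_cases i <;> simp [vec2]

/-- antipode rule: p(-P) = p(P) - π·p(P)/‖p(P)‖; in particular p(-P) lies on the
ray from p(P) through the origin (beyond the origin) and ‖p(P) - p(-P)‖ = π. -/
theorem stmt9 (P : E3) (hP : P ∈ Metric.sphere (0 : E3) 1) (hF : P ≠ Fpt) (hB : P ≠ Bpt) :
    persp (-P) = persp P - (Real.pi / ‖persp P‖) • persp P ∧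
    (∃ t : ℝ, t < 0 ∧ persp (-P) = t • persp P) ∧
    ‖persp P - persp (-P)‖ = Real.pi := by
  have hn : ‖P‖ = 1 := by simpa using hP
  have hsum : P 0 ^ 2 + P 1 ^ 2 + P 2 ^ 2 = 1 := by
    have := congrArg (· ^ 2) hn
    rw [EuclideanSpace.norm_eq] at this
    simp only [Fin.sum_univ_three] at this
    rw [Real.sq_sqrt (by positivity)] at this
    simpa [sq_abs] using this
  set x := P 0; set y := P 1; set z := P 2
  have hy1 : y ≠ 1 := by
    intro h
    apply hF
    have hxz : x ^ 2 + z ^ 2 = 0 := by nlinarith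
    have hx : x = 0 := by nlinarith [sq_nonneg x, sq_nonneg z]
    have hz : z = 0 := by nlinarith [sq_nonneg x, sq_nonneg z]
    ext i; fin_cases i <;> simp [Fpt, vec3, show P 0 = 0 from hx, show P 1 = 1 from h,
      show P 2 = 0 from hz]
  have hy2 : y ≠ -1 := by
    intro h
    apply hB
    have hx : x = 0 := by nlinarith [sq_nonneg x, sq_nonneg z]
    have hz : z = 0 := by nlinarith [sq_nonneg x, sq_nonneg z]
    ext i; fin_cases i <;> simp [Bpt, vec3, show P 0 = 0 from hx, show P 1 = -1 from h,
      show P 2 = 0 from hz]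
  have hylt : y < 1 := lt_of_le_of_ne (by nlinarith [sq_nonneg x, sq_nonneg z]) hy1
  have hygt : -1 < y := lt_of_le_of_ne (by nlinarith [sq_nonneg x, sq_nonneg z]) (Ne.symm hy2)
  have hxz : 0 < x ^ 2 + z ^ 2 := by nlinarith
  set s := Real.sqrt (x ^ 2 + z ^ 2) with hs_def
  have hs : 0 < s := Real.sqrt_pos.mpr hxz
  set A := Real.arccos y with hA_def
  have hA : 0 < A := Real.arccos_pos.mpr hylt
  have hApi : A < Real.pi := lt_of_le_of_ne (Real.arccos_le_pi y)
    (fun h => absurd (Real.arccos_eq_pi.mp h) (by linarith))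
  -- persp P
  have hpP : persp P = (A / s) • vec2 x z := by
    rw [persp, hn, div_one]
  have hnP : ‖-P‖ = 1 := by rw [norm_neg, hn]
  have hneg : ∀ i, (-P) i = -(P i) := fun i => rfl
  have hpN : persp (-P) = (-(Real.pi - A) / s) • vec2 x z := by
    rw [persp, hnP, div_one, hneg 0, hneg 1, hneg 2,
      show (-x) ^ 2 = x ^ 2 by ring, show (-z) ^ 2 = z ^ 2 by ring,
      Real.arccos_neg, vec2_neg, smul_neg, ← neg_smul, neg_div]
  have hnormP : ‖persp P‖ = A := by
    rw [hpP, norm_smul, norm_vec2, ← hs_def, Real.norm_eq_abs,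
      abs_of_pos (div_pos hA hs), div_mul_cancel₀ _ hs.ne']
  refine ⟨?_, ⟨(A - Real.pi) / A, ?_, ?_⟩, ?_⟩
  · rw [hpN, hnormP, hpP, smul_smul, ← sub_smul]
    congr 1
    field_simp
    ring
  · exact div_neg_of_neg_of_pos (by linarith) hA
  · rw [hpN, hpP, smul_smul]
    congr 1
    field_simp
    ring
  · rw [hpN, hpP, ← sub_smul, norm_smul, norm_vec2, ← hs_def, Real.norm_eq_abs]
    have : A / s - -(Real.pi - A) / s = Real.pi / s := by field_simp; ring
    rw [this, abs_of_pos (div_pos Real.pi_pos hs), div_mul_cancel₀ _ hs.ne']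
end
end

section
/- (Freehand proposition.) Let p be the total spherical perspective map and P ∈ S² \ {F, B}. Let u = p(P)/‖p(P)‖ and let P_B = π·(−u) be the point where the ray from p(P) through the origin meets the blowup circle of radius π. Then ‖p(−P) − P_B‖ = ‖p(P)‖ and ‖p(−P)‖ = ‖p(P) − π·u‖ (i.e., the distance from p(−P) to the center equals the distance from p(P) to the diametrically opposite blowup point π·u). -/
open scoped RealInnerProductSpace

noncomputable section

/-- freehand rule: with u = p(P)/‖p(P)‖ and P_B = -π·u the blowup point on the
ray from p(P) through the origin, ‖p(-P) - P_B‖ = ‖p(P)‖ and ‖p(-P)‖ = ‖p(P) - π·u‖. -/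
theorem stmt10 (P : E3) (hP : P ∈ Metric.sphere (0 : E3) 1) (hF : P ≠ Fpt) (hB : P ≠ Bpt) :
    ‖persp (-P) - Real.pi • (-(‖persp P‖⁻¹ • persp P))‖ = ‖persp P‖ ∧
    ‖persp (-P)‖ = ‖persp P - Real.pi • (‖persp P‖⁻¹ • persp P)‖ := by
  have hnorm : ‖P‖ = 1 := by simpa using hP
  have hsum : P 0 ^ 2 + P 1 ^ 2 + P 2 ^ 2 = 1 := by
    have := congrArg (· ^ 2) hnorm
    rw [EuclideanSpace.norm_eq] at this
    simp only [Fin.sum_univ_three, Real.norm_eq_abs, sq_abs] at this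
    rw [Real.sq_sqrt (by positivity)] at this
    linarith
  have hy1 : P 1 ≠ 1 := by
    intro h
    apply hF
    have h0 : P 0 = 0 ∧ P 2 = 0 := by constructor <;> nlinarith [sq_nonneg (P 0), sq_nonneg (P 2)]
    ext i
    fin_cases i <;> simp [Fpt, vec3, h0.1, h0.2, h]
  have hy2 : P 1 ≠ -1 := by
    intro h
    apply hB
    have h0 : P 0 = 0 ∧ P 2 = 0 := by constructor <;> nlinarith [sq_nonneg (P 0), sq_nonneg (P 2)]
    ext i
    fin_cases i <;> simp [Bpt, vec3, h0.1, h0.2, h]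
  have hylt : P 1 < 1 := lt_of_le_of_ne (by nlinarith [sq_nonneg (P 0), sq_nonneg (P 2), sq_nonneg (P 1 - 1)]) hy1
  have hygt : -1 < P 1 := lt_of_le_of_ne (by nlinarith [sq_nonneg (P 0), sq_nonneg (P 2), sq_nonneg (P 1 + 1)]) (Ne.symm hy2)
  set θ := Real.arccos (P 1) with hθdef
  have hθpos : 0 < θ := Real.arccos_pos.mpr hylt
  have hθlt : θ < Real.pi := lt_of_le_of_ne (Real.arccos_le_pi _) (fun h => absurd (Real.arccos_eq_pi.mp h) (not_le.mpr hygt))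
  set r := Real.sqrt (P 0 ^ 2 + P 2 ^ 2) with hrdef
  have hr2 : r ^ 2 = P 0 ^ 2 + P 2 ^ 2 := Real.sq_sqrt (by positivity)
  have hrpos : 0 < r := by
    rw [hrdef]
    apply Real.sqrt_pos.mpr
    nlinarith [sq_nonneg (P 0), sq_nonneg (P 2)]
  set v : E2 := vec2 (P 0) (P 2) with hvdef
  have hvnorm : ‖v‖ = r := by
    rw [hvdef, EuclideanSpace.norm_eq]
    simp [vec2, Fin.sum_univ_two]
    exact hrdef.symm
  have hpP : persp P = (θ / r) • v := by
    rw [persp, hnorm]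
    simp
    rfl
  have hpnP : persp (-P) = -(((Real.pi - θ) / r) • v) := by
    have hn : ‖(-P : E3)‖ = 1 := by rw [norm_neg, hnorm]
    rw [persp]
    simp only [PiLp.neg_apply, hn, div_one, neg_sq]
    rw [Real.arccos_neg, ← hθdef, ← hrdef]
    have : vec2 (-P 0) (-P 2) = -v := by
      rw [hvdef]
      ext i
      fin_cases i <;> simp [vec2]
    rw [this, smul_neg]
  have hnpP : ‖persp P‖ = θ := by
    rw [hpP, norm_smul, hvnorm, Real.norm_eq_abs, abs_of_pos (by positivity),
      div_mul_cancel₀ _ (ne_of_gt hrpos)]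
  have hu : ‖persp P‖⁻¹ • persp P = r⁻¹ • v := by
    rw [hnpP, hpP, smul_smul]
    congr 1
    field_simp
  constructor
  · rw [hpnP, hu, hnpP, smul_neg, sub_neg_eq_add, ← neg_smul, smul_smul, ← add_smul]
    rw [norm_smul, hvnorm, Real.norm_eq_abs]
    have h1 : -((Real.pi - θ) / r) + Real.pi * r⁻¹ = θ / r := by field_simp; ring
    rw [h1, abs_of_pos (by positivity), div_mul_cancel₀ _ (ne_of_gt hrpos)]
  · rw [hpnP, hu, hpP, smul_smul, ← sub_smul]
    rw [norm_neg, norm_smul, norm_smul, hvnorm, Real.norm_eq_abs, Real.norm_eq_abs]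
    congr 1
    have h1 : θ / r - Real.pi * r⁻¹ = -((Real.pi - θ) / r) := by field_simp; ring
    rw [h1, abs_neg]
end
end

section
/- Let ℓ be a central line, i.e., a line in ℝ³ with direction (0,1,0) passing through a point P₀ = (a, b, c) with (a,c) ≠ (0,0). Then the image of ℓ under the total spherical perspective map p is contained in the fixed open ray {t·(a,c)/√(a²+c²) : t ∈ (0,π)} from the origin, and as the parameter along ℓ tends to +∞ the image tends to the origin (the image of F), while as it tends to −∞ the norm of the image tends to π (the blowup of B). -/
open scoped RealInnerProductSpace

noncomputable section

lemma aux_tendsto_top (k : ℝ) :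
    Filter.Tendsto (fun y : ℝ => y / Real.sqrt (k + y ^ 2)) Filter.atTop (nhds 1) := by
  have hev : ∀ᶠ y in Filter.atTop, (Real.sqrt (k / y ^ 2 + 1))⁻¹
      = y / Real.sqrt (k + y ^ 2) := by
    filter_upwards [Filter.eventually_gt_atTop (0:ℝ)] with y hy
    have hs : Real.sqrt (k + y ^ 2) = y * Real.sqrt (k / y ^ 2 + 1) := by
      rw [← Real.sqrt_sq hy.le, ← Real.sqrt_mul (sq_nonneg y)]
      congr 1
      field_simp
      rw [Real.sq_sqrt (sq_nonneg y)]
    rw [hs]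
    field_simp
  refine Filter.Tendsto.congr' hev ?_
  have h0 : Filter.Tendsto (fun y : ℝ => k / y ^ 2 + 1) Filter.atTop (nhds 1) := by
    have h1 : Filter.Tendsto (fun y : ℝ => k / y ^ 2) Filter.atTop (nhds 0) := by
      simpa [div_eq_mul_inv] using
        ((Filter.tendsto_pow_atTop (two_ne_zero)).inv_tendsto_atTop.const_mul k)
    simpa using h1.add_const 1
  have h2 : Filter.Tendsto (fun y : ℝ => Real.sqrt (k / y ^ 2 + 1)) Filter.atTop (nhds 1) := by
    simpa [Function.comp_def] using (Real.continuous_sqrt.tendsto 1).comp h0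
  simpa using h2.inv₀ one_ne_zero

lemma aux_tendsto_bot (k : ℝ) :
    Filter.Tendsto (fun y : ℝ => y / Real.sqrt (k + y ^ 2)) Filter.atBot (nhds (-1)) := by
  have h1 : Filter.Tendsto (fun y : ℝ => (-y) / Real.sqrt (k + (-y) ^ 2))
      Filter.atTop (nhds (-1)) := by
    have := (aux_tendsto_top k).neg
    simpa [neg_div] using this
  have := h1.comp Filter.tendsto_neg_atBot_atTop
  simpa [Function.comp_def, neg_neg, neg_sq] using this

lemma arccos_lt_pi' {x : ℝ} (hx : -1 < x) : Real.arccos x < Real.pi := by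
  have := Real.neg_pi_div_two_lt_arcsin.2 hx
  rw [Real.arccos]
  linarith

/-- a central line t ↦ (a, b + t, c) with (a,c) ≠ (0,0) maps into the fixed open
ray {s·(a,c)/√(a²+c²) : s ∈ (0,π)}; as t → +∞ the image tends to the origin (image of F), and
as t → -∞ the norm of the image tends to π (the blowup of B). -/
theorem stmt14 (a b c : ℝ) (h : a ≠ 0 ∨ c ≠ 0) :
    (∀ t : ℝ, ∃ s ∈ Set.Ioo 0 Real.pi,
      persp (vec3 a (b + t) c) = s • ((Real.sqrt (a ^ 2 + c ^ 2))⁻¹ • vec2 a c)) ∧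
    Filter.Tendsto (fun t => persp (vec3 a (b + t) c)) Filter.atTop (nhds 0) ∧
    Filter.Tendsto (fun t => ‖persp (vec3 a (b + t) c)‖) Filter.atBot (nhds Real.pi) := by
  have hk : 0 < a ^ 2 + c ^ 2 := by rcases h with h | h <;> positivity
  have hr : 0 < Real.sqrt (a ^ 2 + c ^ 2) := Real.sqrt_pos.2 hk
  set u : E2 := (Real.sqrt (a ^ 2 + c ^ 2))⁻¹ • vec2 a c with hu
  have hv2 : ‖vec2 a c‖ = Real.sqrt (a ^ 2 + c ^ 2) := by
    simp [vec2, EuclideanSpace.norm_eq, Fin.sum_univ_two, sq_abs]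
  have hun : ‖u‖ = 1 := by
    rw [hu, norm_smul, hv2, norm_inv, Real.norm_of_nonneg hr.le, inv_mul_cancel₀ hr.ne']
  have hN : ∀ y : ℝ, ‖vec3 a y c‖ = Real.sqrt ((a ^ 2 + c ^ 2) + y ^ 2) := fun y => by
    have : ‖vec3 a y c‖ = Real.sqrt (a ^ 2 + y ^ 2 + c ^ 2) := by
      simp [vec3, EuclideanSpace.norm_eq, Fin.sum_univ_three, sq_abs]
    rw [this]; ring_nf
  have hglt : ∀ y : ℝ, |y / Real.sqrt ((a ^ 2 + c ^ 2) + y ^ 2)| < 1 := by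
    intro y
    have h1 : |y| < Real.sqrt ((a ^ 2 + c ^ 2) + y ^ 2) := by
      rw [← Real.sqrt_sq_eq_abs]
      exact Real.sqrt_lt_sqrt (sq_nonneg y) (by linarith)
    have h2 : (0:ℝ) < Real.sqrt ((a ^ 2 + c ^ 2) + y ^ 2) :=
      lt_of_le_of_lt (abs_nonneg y) h1
    rw [abs_div, abs_of_pos h2, div_lt_one h2]
    exact h1
  have hsIoo : ∀ y : ℝ,
      Real.arccos (y / Real.sqrt ((a ^ 2 + c ^ 2) + y ^ 2)) ∈ Set.Ioo 0 Real.pi := fun y => by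
    obtain ⟨h1, h2⟩ := abs_lt.1 (hglt y)
    exact ⟨Real.arccos_pos.2 h2, arccos_lt_pi' h1⟩
  have key : ∀ y : ℝ, persp (vec3 a y c)
      = Real.arccos (y / Real.sqrt ((a ^ 2 + c ^ 2) + y ^ 2)) • u := fun y => by
    have h1 : persp (vec3 a y c)
        = (Real.arccos (y / ‖vec3 a y c‖) / Real.sqrt (a ^ 2 + c ^ 2)) • vec2 a c := rfl
    rw [h1, hN y, hu, smul_smul, div_eq_mul_inv]
  refine ⟨fun t => ⟨_, hsIoo (b + t), key (b + t)⟩, ?_, ?_⟩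
  · have hbt : Filter.Tendsto (fun t : ℝ => b + t) Filter.atTop Filter.atTop :=
      Filter.tendsto_atTop_add_const_left _ b Filter.tendsto_id
    have hgt := (aux_tendsto_top (a ^ 2 + c ^ 2)).comp hbt
    have hst : Filter.Tendsto
        (fun t => Real.arccos ((b + t) / Real.sqrt ((a ^ 2 + c ^ 2) + (b + t) ^ 2)))
        Filter.atTop (nhds 0) := by
      have := (Real.continuous_arccos.tendsto 1).comp hgt
      simpa [Real.arccos_one, Function.comp_def] using this
    have := hst.smul_const u
    simp only [zero_smul] at this
    exact Filter.Tendsto.congr (fun t => (key (b + t)).symm) this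
  · have hbt : Filter.Tendsto (fun t : ℝ => b + t) Filter.atBot Filter.atBot :=
      Filter.tendsto_atBot_add_const_left _ b Filter.tendsto_id
    have hgt := (aux_tendsto_bot (a ^ 2 + c ^ 2)).comp hbt
    have hst : Filter.Tendsto
        (fun t => Real.arccos ((b + t) / Real.sqrt ((a ^ 2 + c ^ 2) + (b + t) ^ 2)))
        Filter.atBot (nhds Real.pi) := by
      have := (Real.continuous_arccos.tendsto (-1)).comp hgt
      simpa [Real.arccos_neg_one, Function.comp_def] using this
    refine Filter.Tendsto.congr (fun t => ?_) hst
    rw [key, norm_smul, hun, mul_one, Real.norm_of_nonneg (hsIoo (b + t)).1.le]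
end
end

section
/- Let ℓ be a frontal line in the observer's plane, i.e., ℓ ⊆ {y = 0}, not through the origin. Then the image of ℓ under the total spherical perspective map p is contained in the circle of radius π/2 centered at the origin of ℝ², and its closure in ℝ² is a closed half of that circle (an arc of angular length π) whose endpoints are p-images of the two unit direction vectors ±d of ℓ. -/
open scoped RealInnerProductSpace

noncomputable section

namespace S15
open Real

lemma vec2_0 (a b : ℝ) : vec2 a b 0 = a := rfl
lemma vec2_1 (a b : ℝ) : vec2 a b 1 = b := rfl
lemma norm_vec2 (a b : ℝ) : ‖vec2 a b‖ = Real.sqrt (a^2 + b^2) := by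
  rw [EuclideanSpace.norm_eq]; simp [vec2, Fin.sum_univ_two]
lemma inner2 (x y : E2) : ⟪x, y⟫ = x 0 * y 0 + x 1 * y 1 := by
  simp [PiLp.inner_apply, RCLike.inner_apply, Fin.sum_univ_two]; ring
lemma inner3 (x y : E3) : ⟪x, y⟫ = x 0 * y 0 + x 1 * y 1 + x 2 * y 2 := by
  simp [PiLp.inner_apply, RCLike.inner_apply, Fin.sum_univ_three]; ring
lemma e2_ext (w : E2) : w = vec2 (w 0) (w 1) := by ext i; fin_cases i <;> rfl
lemma smul_vec2 (c a b : ℝ) : c • vec2 a b = vec2 (c*a) (c*b) := by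
  ext i; fin_cases i <;> simp [vec2]
lemma add_vec2 (a b c d : ℝ) : vec2 a b + vec2 c d = vec2 (a+c) (b+d) := by
  ext i; fin_cases i <;> simp [vec2]
lemma e3_zero (P : E3) (h0 : P 0 = 0) (h1 : P 1 = 0) (h2 : P 2 = 0) : P = 0 := by
  ext i; fin_cases i <;> simp [h0, h1, h2]
lemma persp_y0 (P : E3) (h1 : P 1 = 0) :
    persp P = (π/2 / Real.sqrt ((P 0)^2 + (P 2)^2)) • vec2 (P 0) (P 2) := by
  unfold persp; rw [h1, zero_div, Real.arccos_zero]

-- pure algebra lemmas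
lemma alg_orth (a0 a2 d0 d2 : ℝ) (hdu : d0^2 + d2^2 = 1) :
    (a0 - (a0*d0+a2*d2)*d0)*d0 + (a2 - (a0*d0+a2*d2)*d2)*d2 = 0 := by
  linear_combination (-(a0*d0+a2*d2)) * hdu
lemma alg_l1 (d0 d2 n0 n2 : ℝ) (hdu : d0^2 + d2^2 = 1) (horth : n0*d0 + n2*d2 = 0) :
    n0 = -(n2*d0 - n0*d2) * d2 := by
  linear_combination d0*horth - n0*hdu
lemma alg_l2 (d0 d2 n0 n2 : ℝ) (hdu : d0^2 + d2^2 = 1) (horth : n0*d0 + n2*d2 = 0) :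
    n2 = (n2*d0 - n0*d2) * d0 := by
  linear_combination d2*horth - n2*hdu
lemma alg_key (d0 d2 n0 n2 w0 w1 : ℝ) (hdu : d0^2 + d2^2 = 1)
    (horth : n0*d0 + n2*d2 = 0) :
    (w0*n0 + w1*n2) * n0 + (n0^2+n2^2) * (w0*d0 + w1*d2) * d0 = (n0^2+n2^2) * w0 ∧
    (w0*n0 + w1*n2) * n2 + (n0^2+n2^2) * (w0*d0 + w1*d2) * d2 = (n0^2+n2^2) * w1 := by
  have h1 := alg_l1 d0 d2 n0 n2 hdu horth
  have h2 := alg_l2 d0 d2 n0 n2 hdu horth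
  obtain ⟨l, hl⟩ : ∃ x, n2*d0 - n0*d2 = x := ⟨_, rfl⟩
  rw [hl] at h1 h2
  rw [h1, h2]
  constructor
  · linear_combination (l^2*d2*(w1*d0 - w0*d2) + w0*l^2*(d0^2+d2^2))*hdu
  · linear_combination (l^2*d0*(w0*d2 - w1*d0) + w1*l^2*(d0^2+d2^2))*hdu

/-- image characterization -/
lemma image_char (A d : E3) (hA : A 1 = 0) (hd1 : d 1 = 0) (hd : ‖d‖ = 1)
    (hO : ∀ t : ℝ, A + t • d ≠ 0) :
    persp '' lineSet A d
      = {w : E2 | ‖w‖ = π/2 ∧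
          0 < ⟪w, vec2 ((A - ⟪A, d⟫ • d) 0) ((A - ⟪A, d⟫ • d) 2)⟫} := by
  have hdu : d 0 ^ 2 + d 2 ^ 2 = 1 := by
    have h2 : ‖d‖^2 = 1 := by rw [hd]; norm_num
    rw [EuclideanSpace.norm_eq] at h2
    rw [Real.sq_sqrt (by positivity)] at h2
    simpa [Fin.sum_univ_three, hd1] using h2
  obtain ⟨a0, ha0⟩ : ∃ x, A 0 = x := ⟨_, rfl⟩
  obtain ⟨a2, ha2⟩ : ∃ x, A 2 = x := ⟨_, rfl⟩
  obtain ⟨d0, hd0⟩ : ∃ x, d 0 = x := ⟨_, rfl⟩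
  obtain ⟨d2, hd2⟩ : ∃ x, d 2 = x := ⟨_, rfl⟩
  rw [hd0, hd2] at hdu
  have hc : ⟪A, d⟫ = a0 * d0 + a2 * d2 := by
    rw [inner3, hA, ha0, ha2, hd0, hd2]; ring
  have hN0 : (A - ⟪A, d⟫ • d) 0 = a0 - (a0 * d0 + a2 * d2) * d0 := by
    simp [hc, ha0, hd0]
  have hN2 : (A - ⟪A, d⟫ • d) 2 = a2 - (a0 * d0 + a2 * d2) * d2 := by
    simp [hc, ha2, hd2]
  obtain ⟨n0, hn0def⟩ : ∃ x, a0 - (a0*d0+a2*d2)*d0 = x := ⟨_, rfl⟩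
  obtain ⟨n2, hn2def⟩ : ∃ x, a2 - (a0*d0+a2*d2)*d2 = x := ⟨_, rfl⟩
  rw [hn0def] at hN0
  rw [hn2def] at hN2
  rw [hN0, hN2]
  have horth : n0*d0 + n2*d2 = 0 := by
    have h := alg_orth a0 a2 d0 d2 hdu
    rw [hn0def, hn2def] at h; exact h
  have hρ : 0 < n0^2 + n2^2 := by
    rcases lt_or_eq_of_le (by positivity : (0:ℝ) ≤ n0^2 + n2^2) with h | h
    · exact h
    · exfalso
      have hz0 : n0 = 0 := by nlinarith [sq_nonneg n0, sq_nonneg n2]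
      have hz2 : n2 = 0 := by nlinarith [sq_nonneg n0, sq_nonneg n2]
      apply hO (-(a0*d0+a2*d2))
      apply e3_zero
      · simp only [PiLp.add_apply, PiLp.smul_apply, smul_eq_mul, ha0, hd0]
        linear_combination hn0def + hz0
      · simp [hA, hd1]
      · simp only [PiLp.add_apply, PiLp.smul_apply, smul_eq_mul, ha2, hd2]
        linear_combination hn2def + hz2
  ext w
  simp only [Set.mem_image, Set.mem_setOf_eq]
  constructor
  · rintro ⟨P, ⟨t, rfl⟩, rfl⟩
    have hP1 : (A + t • d) 1 = 0 := by simp [hA, hd1]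
    have hP0 : (A + t • d) 0 = n0 + (t + (a0*d0+a2*d2)) * d0 := by
      simp only [PiLp.add_apply, PiLp.smul_apply, smul_eq_mul, ha0, hd0]
      linear_combination hn0def
    have hP2 : (A + t • d) 2 = n2 + (t + (a0*d0+a2*d2)) * d2 := by
      simp only [PiLp.add_apply, PiLp.smul_apply, smul_eq_mul, ha2, hd2]
      linear_combination hn2def
    obtain ⟨s, hs⟩ : ∃ x, t + (a0*d0+a2*d2) = x := ⟨_, rfl⟩
    rw [hs] at hP0 hP2
    rw [persp_y0 _ hP1, hP0, hP2]
    have hr2 : (n0 + s*d0)^2 + (n2 + s*d2)^2 = (n0^2+n2^2) + s^2 := by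
      linear_combination s^2*hdu + 2*s*horth
    have hr2pos : 0 < (n0 + s*d0)^2 + (n2 + s*d2)^2 := by rw [hr2]; positivity
    have hsp : 0 < Real.sqrt ((n0 + s*d0)^2 + (n2 + s*d2)^2) := Real.sqrt_pos.mpr hr2pos
    constructor
    · rw [norm_smul, norm_vec2, Real.norm_eq_abs, abs_of_pos (by positivity),
        div_mul_cancel₀]
      exact hsp.ne'
    · rw [real_inner_smul_left, inner2, vec2_0, vec2_1, vec2_0, vec2_1]
      have hin : (n0 + s*d0) * n0 + (n2 + s*d2) * n2 = n0^2 + n2^2 := by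
        linear_combination s*horth
      rw [hin]; positivity
  · rintro ⟨hw, hwi⟩
    rw [inner2, vec2_0, vec2_1] at hwi
    obtain ⟨w0, hw0⟩ : ∃ x, w 0 = x := ⟨_, rfl⟩
    obtain ⟨w1, hw1⟩ : ∃ x, w 1 = x := ⟨_, rfl⟩
    rw [hw0, hw1] at hwi
    have hwn : w0^2 + w1^2 = (π/2)^2 := by
      rw [e2_ext w, norm_vec2, hw0, hw1] at hw
      have h := congrArg (·^2) hw
      simpa [Real.sq_sqrt (by positivity : (0:ℝ) ≤ w0^2 + w1^2)] using h
    obtain ⟨α, hαdef⟩ : ∃ x, w0*n0 + w1*n2 = x := ⟨_, rfl⟩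
    obtain ⟨β, hβdef⟩ : ∃ x, w0*d0 + w1*d2 = x := ⟨_, rfl⟩
    obtain ⟨ρ2, hρ2def⟩ : ∃ x, n0^2 + n2^2 = x := ⟨_, rfl⟩
    rw [hαdef] at hwi
    rw [hρ2def] at hρ
    refine ⟨A + (ρ2 * β / α - (a0*d0+a2*d2)) • d, ⟨_, rfl⟩, ?_⟩
    have hkey := alg_key d0 d2 n0 n2 w0 w1 hdu horth
    rw [hαdef, hβdef, hρ2def] at hkey
    have hP1 : (A + (ρ2 * β / α - (a0*d0+a2*d2)) • d) 1 = 0 := by simp [hA, hd1]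
    have hαne : α ≠ 0 := ne_of_gt hwi
    have hP0 : (A + (ρ2 * β / α - (a0*d0+a2*d2)) • d) 0 = (ρ2/α) * w0 := by
      simp only [PiLp.add_apply, PiLp.smul_apply, smul_eq_mul, ha0, hd0]
      field_simp
      linear_combination hkey.1 + α * hn0def
    have hP2 : (A + (ρ2 * β / α - (a0*d0+a2*d2)) • d) 2 = (ρ2/α) * w1 := by
      simp only [PiLp.add_apply, PiLp.smul_apply, smul_eq_mul, ha2, hd2]
      field_simp
      linear_combination hkey.2 + α * hn2def
    rw [persp_y0 _ hP1, hP0, hP2]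
    have hμ : 0 < ρ2/α := by positivity
    have hr2 : ((ρ2/α) * w0)^2 + ((ρ2/α) * w1)^2 = ((ρ2/α) * (π/2))^2 := by
      linear_combination ((ρ2/α)^2) * hwn
    rw [hr2, Real.sqrt_sq (by positivity), smul_vec2]
    rw [e2_ext w, hw0, hw1]
    have hρne : ρ2 ≠ 0 := hρ.ne'
    have hπne : π ≠ 0 := Real.pi_ne_zero
    have h0 : π/2/(ρ2/α*(π/2)) * (ρ2/α*w0) = w0 := by
      field_simp
    have h1 : π/2/(ρ2/α*(π/2)) * (ρ2/α*w1) = w1 := by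
      field_simp
    rw [h0, h1]

lemma boundary_mem (n0 n2 e0 e1 : ℝ) (hρ : 0 < n0^2 + n2^2) (he : e0^2 + e1^2 = 1)
    (horth : e0*n0 + e1*n2 = 0) :
    vec2 ((π/2)*e0) ((π/2)*e1) ∈
      closure {w : E2 | ‖w‖ = π/2 ∧ 0 < ⟪w, vec2 n0 n2⟫} := by
  obtain ⟨ρ, hρdef⟩ : ∃ x, Real.sqrt (n0^2+n2^2) = x := ⟨_, rfl⟩
  have hρpos : 0 < ρ := hρdef ▸ Real.sqrt_pos.mpr hρ
  have hρsq : ρ^2 = n0^2+n2^2 := by rw [← hρdef]; exact Real.sq_sqrt hρ.le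
  obtain ⟨m0, hm0⟩ : ∃ x, n0/ρ = x := ⟨_, rfl⟩
  obtain ⟨m1, hm1⟩ : ∃ x, n2/ρ = x := ⟨_, rfl⟩
  have hm : m0^2 + m1^2 = 1 := by
    rw [← hm0, ← hm1]; field_simp; linear_combination -hρsq
  have hmo : e0*m0 + e1*m1 = 0 := by
    rw [← hm0, ← hm1]; field_simp; linear_combination horth
  have hmn : m0*n0 + m1*n2 = ρ := by
    rw [← hm0, ← hm1]; field_simp; linear_combination -hρsq
  set f : ℝ → E2 := fun θ =>
    (π/2) • (Real.cos θ • vec2 e0 e1 + Real.sin θ • vec2 m0 m1) with hf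
  have hcont : Continuous f := by
    rw [hf]; fun_prop
  have hfθ : ∀ θ, f θ = vec2 ((π/2)*(Real.cos θ * e0 + Real.sin θ * m0))
      ((π/2)*(Real.cos θ * e1 + Real.sin θ * m1)) := by
    intro θ
    rw [hf]; simp only
    rw [smul_vec2, smul_vec2, add_vec2, smul_vec2]
  have hf0 : f 0 = vec2 ((π/2)*e0) ((π/2)*e1) := by
    rw [hfθ]; simp
  have hmem : ∀ θ : ℝ, 0 < θ → θ < π →
      f θ ∈ {w : E2 | ‖w‖ = π/2 ∧ 0 < ⟪w, vec2 n0 n2⟫} := by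
    intro θ h0 hπ
    have hsin : 0 < Real.sin θ := Real.sin_pos_of_pos_of_lt_pi h0 hπ
    have hsc := Real.sin_sq_add_cos_sq θ
    constructor
    · rw [hfθ, norm_vec2]
      have hE : ((π/2)*(Real.cos θ * e0 + Real.sin θ * m0))^2
          + ((π/2)*(Real.cos θ * e1 + Real.sin θ * m1))^2 = (π/2)^2 := by
        linear_combination ((π/2)^2*(Real.cos θ)^2)*he + ((π/2)^2*(Real.sin θ)^2)*hm
          + (2*(π/2)^2*(Real.cos θ)*(Real.sin θ))*hmo + ((π/2)^2)*hsc
      rw [hE, Real.sqrt_sq (by positivity)]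
    · rw [hfθ, inner2, vec2_0, vec2_1, vec2_0, vec2_1]
      have hE : (π/2)*(Real.cos θ * e0 + Real.sin θ * m0) * n0
          + (π/2)*(Real.cos θ * e1 + Real.sin θ * m1) * n2
          = (π/2) * Real.sin θ * ρ := by
        linear_combination ((π/2)*(Real.cos θ))*horth + ((π/2)*(Real.sin θ))*hmn
      rw [hE]; positivity
  rw [← hf0]
  apply mem_closure_iff_seq_limit.mpr
  refine ⟨fun k => f (1/(k+1)), fun k => ?_, ?_⟩
  · apply hmem
    · positivity
    · have h1 : (1:ℝ)/(k+1) ≤ 1 := by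
        rw [div_le_one (by positivity)]; linarith [Nat.cast_nonneg (α := ℝ) k]
      linarith [Real.pi_gt_three]
  · have h := (hcont.tendsto 0).comp tendsto_one_div_add_atTop_nhds_zero_nat
    exact h

lemma endpoint_char (d0 d2 n0 n2 w0 w1 r : ℝ) (hdu : d0^2+d2^2 = 1)
    (horth : n0*d0+n2*d2 = 0) (hρ : 0 < n0^2+n2^2)
    (hwn : w0^2+w1^2 = r^2) (hwi : w0*n0 + w1*n2 = 0) :
    (w0 = r*d0 ∧ w1 = r*d2) ∨ (w0 = -(r*d0) ∧ w1 = -(r*d2)) := by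
  obtain ⟨l, hl⟩ : ∃ x, n2*d0 - n0*d2 = x := ⟨_, rfl⟩
  have hl1 : n0 = -l * d2 := by linear_combination d0*horth - n0*hdu - d2*hl
  have hl2 : n2 = l * d0 := by linear_combination d2*horth - n2*hdu + d0*hl
  have hlsq : l^2 = n0^2 + n2^2 := by
    linear_combination (-(n0 - l*d2))*hl1 + (-(n2 + l*d0))*hl2 + (-(l^2))*hdu
  have hlne : l ≠ 0 := by
    intro h; rw [h] at hlsq; rw [← hlsq] at hρ; simp at hρ
  have hcross : w0*d2 = w1*d0 := by
    have h : l * (w1*d0 - w0*d2) = 0 := by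
      linear_combination -(w0*hl1) - w1*hl2 + hwi
    rcases mul_eq_zero.mp h with h' | h'
    · exact absurd h' hlne
    · linarith
  obtain ⟨κ, hκ⟩ : ∃ x, w0*d0 + w1*d2 = x := ⟨_, rfl⟩
  have hw0 : w0 = κ*d0 := by linear_combination -(w0*hdu) + d0*hκ + d2*hcross
  have hw1 : w1 = κ*d2 := by linear_combination -(w1*hdu) + d2*hκ - d0*hcross
  have hκsq : (κ - r)*(κ + r) = 0 := by
    linear_combination hwn - (w0+κ*d0)*hw0 - (w1+κ*d2)*hw1 - κ^2*hdu
  rcases mul_eq_zero.mp hκsq with h | h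
  · have hκr : κ = r := by linarith
    left
    exact ⟨by rw [hw0, hκr], by rw [hw1, hκr]⟩
  · have hκr : κ = -r := by linarith
    right
    exact ⟨by rw [hw0, hκr]; ring, by rw [hw1, hκr]; ring⟩

end S15

/-- a frontal line in the observer plane y = 0, not through the origin, maps into
the circle of radius π/2; its closure is a closed half of that circle (here: the half on the
non-negative side of the direction of A - ⟪A,d⟫d, the foot of the perpendicular from O), whose
endpoints are the images of the two unit directions ±d of the line. -/
theorem stmt15 (A d : E3) (hA : A 1 = 0) (hd1 : d 1 = 0) (hd : ‖d‖ = 1)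
    (hO : ∀ t : ℝ, A + t • d ≠ 0) :
    persp '' lineSet A d ⊆ Metric.sphere (0 : E2) (Real.pi / 2) ∧
    closure (persp '' lineSet A d)
      = {w ∈ Metric.sphere (0 : E2) (Real.pi / 2) |
          0 ≤ ⟪w, vec2 ((A - ⟪A, d⟫ • d) 0) ((A - ⟪A, d⟫ • d) 2)⟫} ∧
    closure (persp '' lineSet A d) \ persp '' lineSet A d = {persp d, persp (-d)} := by
  have hIm := S15.image_char A d hA hd1 hd hO
  have hdu : d 0 ^ 2 + d 2 ^ 2 = 1 := by
    have h2 : ‖d‖^2 = 1 := by rw [hd]; norm_num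
    rw [EuclideanSpace.norm_eq] at h2
    rw [Real.sq_sqrt (by positivity)] at h2
    simpa [Fin.sum_univ_three, hd1] using h2
  obtain ⟨a0, ha0⟩ : ∃ x, A 0 = x := ⟨_, rfl⟩
  obtain ⟨a2, ha2⟩ : ∃ x, A 2 = x := ⟨_, rfl⟩
  obtain ⟨d0, hd0⟩ : ∃ x, d 0 = x := ⟨_, rfl⟩
  obtain ⟨d2, hd2⟩ : ∃ x, d 2 = x := ⟨_, rfl⟩
  rw [hd0, hd2] at hdu
  have hc : ⟪A, d⟫ = a0 * d0 + a2 * d2 := by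
    rw [S15.inner3, hA, ha0, ha2, hd0, hd2]; ring
  have hN0 : (A - ⟪A, d⟫ • d) 0 = a0 - (a0 * d0 + a2 * d2) * d0 := by
    simp [hc, ha0, hd0]
  have hN2 : (A - ⟪A, d⟫ • d) 2 = a2 - (a0 * d0 + a2 * d2) * d2 := by
    simp [hc, ha2, hd2]
  obtain ⟨n0, hn0def⟩ : ∃ x, a0 - (a0*d0+a2*d2)*d0 = x := ⟨_, rfl⟩
  obtain ⟨n2, hn2def⟩ : ∃ x, a2 - (a0*d0+a2*d2)*d2 = x := ⟨_, rfl⟩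
  rw [hn0def] at hN0
  rw [hn2def] at hN2
  rw [hN0, hN2] at hIm ⊢
  have horth : n0*d0 + n2*d2 = 0 := by
    have h := S15.alg_orth a0 a2 d0 d2 hdu
    rw [hn0def, hn2def] at h; exact h
  have horth' : d0*n0 + d2*n2 = 0 := by linear_combination horth
  have hρ : 0 < n0^2 + n2^2 := by
    rcases lt_or_eq_of_le (by positivity : (0:ℝ) ≤ n0^2 + n2^2) with h | h
    · exact h
    · exfalso
      have hz0 : n0 = 0 := by nlinarith [sq_nonneg n0, sq_nonneg n2]
      have hz2 : n2 = 0 := by nlinarith [sq_nonneg n0, sq_nonneg n2]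
      apply hO (-(a0*d0+a2*d2))
      apply S15.e3_zero
      · simp only [PiLp.add_apply, PiLp.smul_apply, smul_eq_mul, ha0, hd0]
        linear_combination hn0def + hz0
      · simp [hA, hd1]
      · simp only [PiLp.add_apply, PiLp.smul_apply, smul_eq_mul, ha2, hd2]
        linear_combination hn2def + hz2
  set π2 : ℝ := Real.pi / 2 with hπ2
  have hπ2pos : 0 < π2 := by rw [hπ2]; positivity
  -- persp of the two directions
  have hpd : persp d = vec2 (π2*d0) (π2*d2) := by
    rw [S15.persp_y0 d hd1, hd0, hd2,
      (show d0^2+d2^2 = 1 from hdu), Real.sqrt_one, div_one, S15.smul_vec2]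
  have hnd1 : (-d) 1 = 0 := by simp [hd1]
  have hpnd : persp (-d) = vec2 (-(π2*d0)) (-(π2*d2)) := by
    rw [S15.persp_y0 _ hnd1]
    simp only [PiLp.neg_apply, hd0, hd2]
    rw [(show (-d0)^2+(-d2)^2 = 1 by linear_combination hdu), Real.sqrt_one, div_one,
      S15.smul_vec2]
    congr 1 <;> ring
  -- norm facts about w on the circle
  have hwnorm : ∀ w : E2, ‖w‖ = π2 → (w 0)^2 + (w 1)^2 = π2^2 := by
    intro w hw
    rw [S15.e2_ext w, S15.norm_vec2] at hw
    have h := congrArg (·^2) hw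
    simpa [Real.sq_sqrt (by positivity : (0:ℝ) ≤ (w 0)^2 + (w 1)^2)] using h
  have hsphere : ∀ w : E2, w ∈ Metric.sphere (0:E2) π2 ↔ ‖w‖ = π2 := by
    intro w; exact mem_sphere_zero_iff_norm
  -- part 1
  have h1 : persp '' lineSet A d ⊆ Metric.sphere (0 : E2) π2 := by
    rw [hIm]; rintro w ⟨hw, _⟩; exact (hsphere w).mpr hw
  -- closedness of the target set
  have hcont2 : Continuous fun w : E2 => ⟪w, vec2 n0 n2⟫ :=
    continuous_id.inner continuous_const
  have hclosed : IsClosed {w ∈ Metric.sphere (0:E2) π2 | 0 ≤ ⟪w, vec2 n0 n2⟫} := by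
    have hrw : {w ∈ Metric.sphere (0:E2) π2 | 0 ≤ ⟪w, vec2 n0 n2⟫}
        = Metric.sphere (0:E2) π2 ∩ {w : E2 | 0 ≤ ⟪w, vec2 n0 n2⟫} := rfl
    rw [hrw]
    exact Metric.isClosed_sphere.inter (isClosed_le continuous_const hcont2)
  have hbd1 := S15.boundary_mem n0 n2 d0 d2 hρ hdu horth'
  have hbd2 := S15.boundary_mem n0 n2 (-d0) (-d2) hρ (by linear_combination hdu)
    (by linear_combination -horth')
  -- part 2
  have h2 : closure (persp '' lineSet A d)
      = {w ∈ Metric.sphere (0:E2) π2 | 0 ≤ ⟪w, vec2 n0 n2⟫} := by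
    rw [hIm]
    apply subset_antisymm
    · apply closure_minimal _ hclosed
      rintro w ⟨hw, hwi⟩
      exact ⟨(hsphere w).mpr hw, le_of_lt hwi⟩
    · rintro w ⟨hws, hwi⟩
      have hwn' : ‖w‖ = π2 := (hsphere w).mp hws
      rcases eq_or_lt_of_le hwi with heq | hlt
      · have hwn := hwnorm w hwn'
        have hwi0 : w 0 * n0 + w 1 * n2 = 0 := by
          rw [S15.inner2, S15.vec2_0, S15.vec2_1] at heq; linarith
        rcases S15.endpoint_char d0 d2 n0 n2 (w 0) (w 1) π2 hdu horth hρ hwn hwi0 with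
          ⟨h0, h1'⟩ | ⟨h0, h1'⟩
        · have hwe : w = vec2 (π2*d0) (π2*d2) := by
            rw [S15.e2_ext w, h0, h1']
          rw [hwe]; exact hbd1
        · have hwe : w = vec2 (π2*(-d0)) (π2*(-d2)) := by
            rw [S15.e2_ext w, h0, h1']; congr 1 <;> ring
          rw [hwe]; exact hbd2
      · exact subset_closure ⟨hwn', hlt⟩
  refine ⟨h1, h2, ?_⟩
  -- part 3
  have hinnd : ⟪persp d, vec2 n0 n2⟫ = 0 := by
    rw [hpd, S15.inner2, S15.vec2_0, S15.vec2_1, S15.vec2_0, S15.vec2_1]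
    linear_combination π2*horth'
  have hinnnd : ⟪persp (-d), vec2 n0 n2⟫ = 0 := by
    rw [hpnd, S15.inner2, S15.vec2_0, S15.vec2_1, S15.vec2_0, S15.vec2_1]
    linear_combination -(π2*horth')
  have hnormd : ‖persp d‖ = π2 := by
    rw [hpd, S15.norm_vec2,
      (show (π2*d0)^2 + (π2*d2)^2 = π2^2 by linear_combination (π2^2)*hdu),
      Real.sqrt_sq hπ2pos.le]
  have hnormnd : ‖persp (-d)‖ = π2 := by
    rw [hpnd, S15.norm_vec2,
      (show (-(π2*d0))^2 + (-(π2*d2))^2 = π2^2 by linear_combination (π2^2)*hdu),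
      Real.sqrt_sq hπ2pos.le]
  rw [h2, hIm]
  ext w
  simp only [Set.mem_diff, Set.mem_setOf_eq, Set.mem_insert_iff, Set.mem_singleton_iff]
  constructor
  · rintro ⟨⟨hws, hge⟩, hnot⟩
    have hwn' : ‖w‖ = π2 := (hsphere w).mp hws
    have heq : ⟪w, vec2 n0 n2⟫ = 0 := by
      by_contra hne
      exact hnot ⟨hwn', lt_of_le_of_ne hge (Ne.symm hne)⟩
    have hwn := hwnorm w hwn'
    have hwi0 : w 0 * n0 + w 1 * n2 = 0 := by
      rw [S15.inner2, S15.vec2_0, S15.vec2_1] at heq; linarith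
    rcases S15.endpoint_char d0 d2 n0 n2 (w 0) (w 1) π2 hdu horth hρ hwn hwi0 with
      ⟨h0, h1'⟩ | ⟨h0, h1'⟩
    · left; rw [hpd, S15.e2_ext w, h0, h1']
    · right; rw [hpnd, S15.e2_ext w, h0, h1']
  · rintro (rfl | rfl)
    · refine ⟨⟨(hsphere _).mpr hnormd, le_of_eq hinnd.symm⟩, ?_⟩
      rintro ⟨-, hlt⟩
      rw [hinnd] at hlt
      exact lt_irrefl 0 hlt
    · refine ⟨⟨(hsphere _).mpr hnormnd, le_of_eq hinnnd.symm⟩, ?_⟩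
      rintro ⟨-, hlt⟩
      rw [hinnnd] at hlt
      exact lt_irrefl 0 hlt
end
end
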